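/- Let 0 < δ < π/2 and let s : [0,δ) → ℝ be continuous, nowhere zero on (0,δ), with s(0) = 0, differentiable at 0 with s'(0) = 0, and with ∫₀^θ |s(τ)·cot(τ)| dτ < ∞ for all θ ∈ (0,δ). Set R(θ) = ∫₀^θ s(τ)·cot(τ) dτ and μ(θ) = 1 + s(θ)/R(θ). If μ(θ) tends to a limit μ_p ∈ ℝ as θ → 0⁺, then μ_p ≥ 2. -/

import Mathlib

open Filter Set MeasureTheory intervalIntegral

private lemma cot_pos_aux {τ : ℝ} (h0 : 0 < τ) (h1 : τ < Real.pi / 2) : 0 < Real.cot τ := by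
  rw [Real.cot_eq_cos_div_sin]
  have hπ := Real.pi_pos
  exact div_pos (Real.cos_pos_of_mem_Ioo ⟨by linarith, h1⟩)
    (Real.sin_pos_of_pos_of_lt_pi h0 (by linarith))

private lemma cot_mul_le_aux {τ : ℝ} (h0 : 0 < τ) (h1 : τ < Real.pi / 2) :
    τ * Real.cot τ ≤ 1 := by
  have hπ := Real.pi_pos
  have hsin : 0 < Real.sin τ := Real.sin_pos_of_pos_of_lt_pi h0 (by linarith)
  have hcos : 0 < Real.cos τ := Real.cos_pos_of_mem_Ioo ⟨by linarith, h1⟩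
  have htan : τ < Real.tan τ := Real.lt_tan h0 h1
  rw [Real.tan_eq_sin_div_cos] at htan
  have : τ * Real.cos τ < Real.sin τ := by
    rwa [lt_div_iff₀ hcos] at htan
  rw [Real.cot_eq_cos_div_sin, ← mul_div_assoc, div_le_one hsin]
  nlinarith

private lemma key_aux (δ μ_p : ℝ) (hδ0 : 0 < δ) (hδ : δ < Real.pi / 2)
    (s : ℝ → ℝ)
    (hspos : ∀ θ ∈ Set.Ioo 0 δ, 0 < s θ)
    (hs0 : s 0 = 0)
    (hs' : HasDerivWithinAt s 0 (Set.Ici 0) 0)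
    (hint : ∀ θ ∈ Set.Ioo 0 δ,
      IntervalIntegrable (fun τ => s τ * Real.cot τ) MeasureTheory.volume 0 θ)
    (hμ : Filter.Tendsto (fun θ => 1 + s θ / ∫ τ in (0:ℝ)..θ, s τ * Real.cot τ)
      (nhdsWithin 0 (Set.Ioi 0)) (nhds μ_p)) :
    2 ≤ μ_p := by
  set R : ℝ → ℝ := fun θ => ∫ τ in (0:ℝ)..θ, s τ * Real.cot τ with hR
  -- positivity of R
  have hRpos : ∀ θ ∈ Set.Ioo (0:ℝ) δ, 0 < R θ := by
    intro θ hθ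
    refine intervalIntegral.intervalIntegral_pos_of_pos_on (hint θ hθ) ?_ hθ.1
    intro τ hτ
    have hτδ : τ ∈ Set.Ioo (0:ℝ) δ := ⟨hτ.1, hτ.2.trans hθ.2⟩
    exact mul_pos (hspos τ hτδ) (cot_pos_aux hτδ.1 (hτδ.2.trans hδ))
  by_contra hcon
  push_neg at hcon
  set ε : ℝ := (max (μ_p - 1) 0 + 1) / 2 with hεdef
  have hε0 : 0 < ε := by
    have : (0:ℝ) ≤ max (μ_p - 1) 0 := le_max_right _ _
    rw [hεdef]; linarith
  have hε1 : ε < 1 := by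
    have h1 : μ_p - 1 < 1 := by linarith
    have : max (μ_p - 1) 0 < 1 := max_lt h1 one_pos
    rw [hεdef]; linarith
  have hεgt : μ_p - 1 < ε := by
    have h1 : μ_p - 1 ≤ max (μ_p - 1) 0 := le_max_left _ _
    have h2 : max (μ_p - 1) 0 < 1 := max_lt (by linarith) one_pos
    rw [hεdef]; linarith
  -- s/R tends to μ_p - 1
  have h1 : Filter.Tendsto (fun θ => s θ / R θ) (nhdsWithin 0 (Set.Ioi 0)) (nhds (μ_p - 1)) := by
    have := hμ.sub_const 1
    simpa using this
  have hev1 : ∀ᶠ θ in nhdsWithin 0 (Set.Ioi 0), s θ / R θ < ε :=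
    h1.eventually_lt_const hεgt
  -- s θ / θ tends to 0
  have h2 : Filter.Tendsto (fun θ => s θ / θ) (nhdsWithin 0 (Set.Ioi 0)) (nhds (0:ℝ)) := by
    have := hasDerivWithinAt_iff_tendsto_slope.mp hs'
    rw [Set.Ici_sdiff_left] at this
    refine this.congr (fun θ => ?_)
    rw [slope_def_field, hs0, sub_zero, sub_zero]
  have hev2 : ∀ᶠ θ in nhdsWithin 0 (Set.Ioi 0), s θ / θ < 1 :=
    h2.eventually_lt_const one_pos
  have hev3 : ∀ᶠ θ in nhdsWithin 0 (Set.Ioi 0), θ < δ :=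
    (eventually_lt_nhds hδ0).filter_mono nhdsWithin_le_nhds
  obtain ⟨θ₁, hθ₁pos, hsub⟩ := mem_nhdsGT_iff_exists_Ioc_subset.mp
    ((hev1.and (hev2.and hev3)).filter_mono le_rfl)
  set θ₀ : ℝ := min θ₁ (δ / 2) with hθ₀def
  have hθ₀pos : 0 < θ₀ := lt_min hθ₁pos (by linarith)
  have hθ₀δ : θ₀ < δ := lt_of_le_of_lt (min_le_right _ _) (by linarith)
  have hgood : ∀ τ ∈ Set.Ioc (0:ℝ) θ₀, s τ / R τ < ε ∧ s τ / τ < 1 ∧ τ < δ := by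
    intro τ hτ
    exact hsub ⟨hτ.1, hτ.2.trans (min_le_left _ _)⟩
  -- τ ∈ Ioc 0 θ₀ → τ ∈ Ioo 0 δ
  have hIoo : ∀ τ ∈ Set.Ioc (0:ℝ) θ₀, τ ∈ Set.Ioo (0:ℝ) δ := fun τ hτ =>
    ⟨hτ.1, lt_of_le_of_lt hτ.2 hθ₀δ⟩
  -- main induction
  have hmain : ∀ n : ℕ, ∀ θ ∈ Set.Ioc (0:ℝ) θ₀, R θ ≤ ε ^ n * θ := by
    intro n
    induction n with
    | zero =>
      intro θ hθ
      have hθδ := hIoo θ hθ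
      have hle : R θ ≤ ∫ τ in (0:ℝ)..θ, (1:ℝ) := by
        refine intervalIntegral.integral_mono_on hθ.1.le (hint θ hθδ)
          intervalIntegrable_const ?_
        intro τ hτ
        rcases eq_or_lt_of_le hτ.1 with h | h
        · rw [← h, hs0, zero_mul]; norm_num
        · have hτ' : τ ∈ Set.Ioc (0:ℝ) θ₀ := ⟨h, hτ.2.trans hθ.2⟩
          have hτδ := hIoo τ hτ'
          have hcotpos : 0 < Real.cot τ := cot_pos_aux h (hτδ.2.trans hδ)
          have hsτ : s τ ≤ τ := by
            have := (hgood τ hτ').2.1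
            rw [div_lt_one h] at this
            exact this.le
          calc s τ * Real.cot τ ≤ τ * Real.cot τ :=
                mul_le_mul_of_nonneg_right hsτ hcotpos.le
            _ ≤ 1 := cot_mul_le_aux h (hτδ.2.trans hδ)
      calc R θ ≤ ∫ τ in (0:ℝ)..θ, (1:ℝ) := hle
        _ = θ := by simp
        _ = ε ^ 0 * θ := by ring
    | succ n ih =>
      intro θ hθ
      have hθδ := hIoo θ hθ
      have hle : R θ ≤ ∫ τ in (0:ℝ)..θ, (ε ^ (n + 1) : ℝ) := by
        refine intervalIntegral.integral_mono_on hθ.1.le (hint θ hθδ)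
          intervalIntegrable_const ?_
        intro τ hτ
        rcases eq_or_lt_of_le hτ.1 with h | h
        · rw [← h, hs0, zero_mul]
          positivity
        · have hτ' : τ ∈ Set.Ioc (0:ℝ) θ₀ := ⟨h, hτ.2.trans hθ.2⟩
          have hτδ := hIoo τ hτ'
          have hcotpos : 0 < Real.cot τ := cot_pos_aux h (hτδ.2.trans hδ)
          have hRτ : 0 < R τ := hRpos τ hτδ
          have hsR : s τ ≤ ε * R τ := by
            have := (hgood τ hτ').1
            rw [div_lt_iff₀ hRτ] at this
            exact this.le
          have hRle : R τ ≤ ε ^ n * τ := ih τ hτ'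
          have hτcot : τ * Real.cot τ ≤ 1 := cot_mul_le_aux h (hτδ.2.trans hδ)
          calc s τ * Real.cot τ ≤ (ε * R τ) * Real.cot τ :=
                mul_le_mul_of_nonneg_right hsR hcotpos.le
            _ ≤ (ε * (ε ^ n * τ)) * Real.cot τ := by
                refine mul_le_mul_of_nonneg_right ?_ hcotpos.le
                exact mul_le_mul_of_nonneg_left hRle hε0.le
            _ = ε ^ (n + 1) * (τ * Real.cot τ) := by ring
            _ ≤ ε ^ (n + 1) * 1 :=
                mul_le_mul_of_nonneg_left hτcot (by positivity)
            _ = ε ^ (n + 1) := mul_one _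
      calc R θ ≤ ∫ τ in (0:ℝ)..θ, (ε ^ (n + 1) : ℝ) := hle
        _ = θ * ε ^ (n + 1) := by simp [mul_comm]
        _ = ε ^ (n + 1) * θ := by ring
  -- conclude
  have hR0 : 0 < R θ₀ := hRpos θ₀ ⟨hθ₀pos, hθ₀δ⟩
  have htend : Filter.Tendsto (fun n : ℕ => ε ^ n * θ₀) Filter.atTop (nhds 0) := by
    have := (tendsto_pow_atTop_nhds_zero_of_lt_one hε0.le hε1).mul_const θ₀
    simpa using this
  have : R θ₀ ≤ 0 :=
    ge_of_tendsto' htend (fun n => hmain n θ₀ ⟨hθ₀pos, le_refl _⟩)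
  linarith

/-- Corollary for C³-smooth surfaces: if `s : [0,δ) → ℝ` is continuous, nowhere zero
on `(0,δ)`, `s(0) = 0`, differentiable at `0` (from the right) with `s'(0) = 0`, and
`μ(θ) = 1 + s(θ)/∫₀^θ s cot → μ_p` as `θ → 0⁺`, then `μ_p ≥ 2`. -/
theorem stmt_6 (δ μ_p : ℝ) (hδ0 : 0 < δ) (hδ : δ < Real.pi / 2)
    (s : ℝ → ℝ) (hs : ContinuousOn s (Set.Ico 0 δ))
    (hsne : ∀ θ ∈ Set.Ioo 0 δ, s θ ≠ 0)
    (hs0 : s 0 = 0)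
    (hs' : HasDerivWithinAt s 0 (Set.Ici 0) 0)
    (hint : ∀ θ ∈ Set.Ioo 0 δ,
      IntervalIntegrable (fun τ => s τ * Real.cot τ) MeasureTheory.volume 0 θ)
    (hμ : Filter.Tendsto (fun θ => 1 + s θ / ∫ τ in (0:ℝ)..θ, s τ * Real.cot τ)
      (nhdsWithin 0 (Set.Ioi 0)) (nhds μ_p)) :
    2 ≤ μ_p := by
  -- s has constant sign on (0, δ)
  have hmid : δ / 2 ∈ Set.Ioo (0:ℝ) δ := ⟨by linarith, by linarith⟩
  have hIooIco : Set.Ioo (0:ℝ) δ ⊆ Set.Ico 0 δ := fun x hx => ⟨hx.1.le, hx.2⟩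
  have ivt : ∀ a ∈ Set.Ioo (0:ℝ) δ, ∀ b ∈ Set.Ioo (0:ℝ) δ, s a < 0 → 0 < s b → False := by
    intro a ha b hb hna hpb
    have hsub : Set.uIcc a b ⊆ Set.Ioo (0:ℝ) δ := by
      intro x hx
      rcases Set.mem_uIcc.mp hx with ⟨h1, h2⟩ | ⟨h1, h2⟩
      · exact ⟨lt_of_lt_of_le ha.1 h1, lt_of_le_of_lt h2 hb.2⟩
      · exact ⟨lt_of_lt_of_le hb.1 h1, lt_of_le_of_lt h2 ha.2⟩
    have h0 : (0:ℝ) ∈ Set.uIcc (s a) (s b) :=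
      Set.mem_uIcc.mpr (Or.inl ⟨hna.le, hpb.le⟩)
    obtain ⟨x, hx, hx0⟩ := intermediate_value_uIcc (hs.mono (hsub.trans hIooIco)) h0
    exact hsne x (hsub hx) hx0
  have hsign : (∀ θ ∈ Set.Ioo (0:ℝ) δ, 0 < s θ) ∨ (∀ θ ∈ Set.Ioo (0:ℝ) δ, s θ < 0) := by
    rcases (hsne _ hmid).lt_or_gt with hneg | hpos
    · right
      intro θ hθ
      by_contra hle
      push_neg at hle
      exact ivt _ hmid _ hθ hneg (lt_of_le_of_ne hle (Ne.symm (hsne θ hθ)))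
    · left
      intro θ hθ
      by_contra hle
      push_neg at hle
      exact ivt _ hθ _ hmid (lt_of_le_of_ne hle (hsne θ hθ)) hpos
  rcases hsign with hpos | hneg
  · exact key_aux δ μ_p hδ0 hδ s hpos hs0 hs' hint hμ
  · -- apply to -s
    have hpos' : ∀ θ ∈ Set.Ioo (0:ℝ) δ, 0 < (fun θ => -s θ) θ := fun θ hθ => by
      simp [neg_pos]; exact hneg θ hθ
    have hs0' : (fun θ => -s θ) 0 = 0 := by simp [hs0]
    have hs'' : HasDerivWithinAt (fun θ => -s θ) 0 (Set.Ici 0) 0 := by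
      have h := hs'.neg; rw [neg_zero] at h; exact h
    have hint' : ∀ θ ∈ Set.Ioo (0:ℝ) δ,
        IntervalIntegrable (fun τ => (fun θ => -s θ) τ * Real.cot τ)
          MeasureTheory.volume 0 θ := by
      intro θ hθ
      have := (hint θ hθ).neg
      simp only [neg_mul]; exact this
    have hμ' : Filter.Tendsto
        (fun θ => 1 + (fun θ => -s θ) θ / ∫ τ in (0:ℝ)..θ, (fun θ => -s θ) τ * Real.cot τ)
        (nhdsWithin 0 (Set.Ioi 0)) (nhds μ_p) := by
      refine hμ.congr (fun θ => ?_)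
      have : (∫ τ in (0:ℝ)..θ, -s τ * Real.cot τ) = -∫ τ in (0:ℝ)..θ, s τ * Real.cot τ := by
        rw [← intervalIntegral.integral_neg]
        simp [neg_mul]
      simp only [this]
      rw [neg_div_neg_eq]
    exact key_aux δ μ_p hδ0 hδ (fun θ => -s θ) hpos' hs0' hs'' hint' hμ'
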